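/- Let (Ω, 𝓕, P) be a probability space, 𝒢 ⊆ 𝓕 a sub-σ-algebra, S : Ω → ℝ^d a random vector with E[‖S‖²] < ∞, and G : Ω → ℝ^d a random vector with E[‖G‖²] < ∞ and E[|⟨G,S⟩|] < ∞. Assume E[‖S‖² | 𝒢] > 0 almost surely, and define β* := E[⟨G, S⟩ | 𝒢] / E[‖S‖² | 𝒢]. Then for every 𝒢-measurable random variable b : Ω → ℝ with E[b² ‖S‖²] < ∞, one has E[‖G − b·S‖²] ≥ E[‖G − β*·S‖²], with equality if and only if b·S = β*·S almost surely. -/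

import Mathlib

open MeasureTheory
open scoped RealInnerProductSpace


lemma real_cs_aux {W A B : ℝ} (hW : 0 ≤ W) (hA : 0 ≤ A) (hB : 0 ≤ B)
    (h : ∀ q : ℚ, 0 < q → 2 * W ≤ (q : ℝ) * A + B / q) : W ^ 2 ≤ A * B := by
  have hreal : ∀ t : ℝ, 0 < t → 2 * W ≤ t * A + B / t := by
    intro t ht
    have hseq : ∀ n : ℕ, ∃ q : ℚ, t < (q : ℝ) ∧ (q : ℝ) < t + 1 / (n + 1) := by
      intro n
      obtain ⟨q, hq1, hq2⟩ := exists_rat_btwn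
        (lt_add_of_pos_right t (by positivity : (0:ℝ) < 1 / ((n : ℝ) + 1)))
      exact ⟨q, hq1, hq2⟩
    choose q hq1 hq2 using hseq
    have hqpos : ∀ n, 0 < q n := by
      intro n
      have h1 : (0 : ℝ) < (q n : ℝ) := ht.trans (hq1 n)
      exact_mod_cast h1
    have htend : Filter.Tendsto (fun n => (q n : ℝ)) Filter.atTop (nhds t) := by
      have h1 : Filter.Tendsto (fun n : ℕ => t + 1 / ((n : ℝ) + 1)) Filter.atTop (nhds (t + 0)) :=
        Filter.Tendsto.const_add t tendsto_one_div_add_atTop_nhds_zero_nat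
      rw [add_zero] at h1
      exact tendsto_of_tendsto_of_tendsto_of_le_of_le tendsto_const_nhds h1
        (fun n => (hq1 n).le) (fun n => (hq2 n).le)
    have htend2 : Filter.Tendsto (fun n => (q n : ℝ) * A + B / (q n : ℝ))
        Filter.atTop (nhds (t * A + B / t)) :=
      (htend.mul tendsto_const_nhds).add (tendsto_const_nhds.div htend ht.ne')
    exact ge_of_tendsto' htend2 fun n => h (q n) (hqpos n)
  rcases eq_or_lt_of_le hA with hA0 | hApos
  · have hW0 : W ≤ 0 := by
      have hto : Filter.Tendsto (fun n : ℕ => B / ((n : ℝ) + 1)) Filter.atTop (nhds 0) := by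
        simpa [div_eq_mul_inv] using tendsto_one_div_add_atTop_nhds_zero_nat.const_mul B
      have : (2 : ℝ) * W ≤ 0 := ge_of_tendsto' hto fun n => by
        have := hreal ((n : ℝ) + 1) (by positivity)
        rw [← hA0] at this; simpa [div_eq_mul_inv, mul_comm] using this
      linarith
    have : W = 0 := le_antisymm hW0 hW
    simp [this]; positivity
  rcases eq_or_lt_of_le hB with hB0 | hBpos
  · have hW0 : W ≤ 0 := by
      have hto : Filter.Tendsto (fun n : ℕ => (1 / ((n : ℝ) + 1)) * A) Filter.atTop (nhds 0) := by
        simpa using tendsto_one_div_add_atTop_nhds_zero_nat.mul_const A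
      have : (2 : ℝ) * W ≤ 0 := ge_of_tendsto' hto fun n => by
        have := hreal (1 / ((n : ℝ) + 1)) (by positivity)
        rw [← hB0] at this; simpa using this
      linarith
    have : W = 0 := le_antisymm hW0 hW
    simp [this]; positivity
  · set s := Real.sqrt A with hs
    set r := Real.sqrt B with hr
    have hs0 : 0 < s := Real.sqrt_pos.2 hApos
    have hr0 : 0 < r := Real.sqrt_pos.2 hBpos
    have hsA : s ^ 2 = A := Real.sq_sqrt hA
    have hrB : r ^ 2 = B := Real.sq_sqrt hB
    have := hreal (r / s) (by positivity)
    have key : 2 * W ≤ 2 * (r * s) := by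
      have h1 : r / s * A = r * s := by
        field_simp
        nlinarith [hsA]
      have h2 : B / (r / s) = r * s := by
        rw [div_div_eq_mul_div]
        field_simp
        nlinarith [hrB]
      rw [h1, h2] at this; linarith
    nlinarith [key, hW, hs0, hr0]


lemma pullout_nonneg {Ω : Type*} {m0 : MeasurableSpace Ω} (μ : Measure Ω)
    [IsProbabilityMeasure μ] (𝒢 : MeasurableSpace Ω) (h𝒢 : 𝒢 ≤ m0)
    (h g : Ω → ℝ) (hh : StronglyMeasurable[𝒢] h) (hh0 : ∀ ω, 0 ≤ h ω)
    (hgi : Integrable g μ) (hg0 : ∀ ω, 0 ≤ g ω) :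
    ∫⁻ ω, ENNReal.ofReal (h ω * g ω) ∂μ
      = ∫⁻ ω, ENNReal.ofReal (h ω * (μ[g|𝒢]) ω) ∂μ := by
  have hB0 : 0 ≤ᵐ[μ] μ[g|𝒢] := condExp_nonneg (Filter.Eventually.of_forall hg0)
  set hn : ℕ → Ω → ℝ := fun n ω => min (h ω) n with hhn
  have hhnSM : ∀ n, StronglyMeasurable[𝒢] (hn n) := fun n =>
    (hh.measurable.min measurable_const).stronglyMeasurable
  have hhn0 : ∀ n ω, 0 ≤ hn n ω := fun n ω => le_min (hh0 ω) (n.cast_nonneg)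
  have hhnle : ∀ n ω, hn n ω ≤ h ω := fun n ω => min_le_left _ _
  have hint : ∀ n, Integrable (fun ω => hn n ω * g ω) μ := by
    intro n
    refine Integrable.bdd_mul (c := n) hgi ((hhnSM n).mono h𝒢).aestronglyMeasurable (Filter.Eventually.of_forall fun ω => ?_)
    rw [Real.norm_eq_abs, abs_of_nonneg (hhn0 n ω)]
    exact min_le_right _ _
  -- equality at each level n
  have key : ∀ n, ∫⁻ ω, ENNReal.ofReal (hn n ω * g ω) ∂μ
      = ∫⁻ ω, ENNReal.ofReal (hn n ω * (μ[g|𝒢]) ω) ∂μ := by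
    intro n
    have hce : μ[(fun ω => hn n ω * g ω)|𝒢] =ᵐ[μ] fun ω => hn n ω * (μ[g|𝒢]) ω :=
      condExp_mul_of_stronglyMeasurable_left (hhnSM n) (hint n) hgi
    have hint2 : Integrable (fun ω => hn n ω * (μ[g|𝒢]) ω) μ :=
      (integrable_condExp).congr hce
    have hI : ∫ ω, hn n ω * g ω ∂μ = ∫ ω, hn n ω * (μ[g|𝒢]) ω ∂μ := by
      rw [← integral_condExp h𝒢 (f := fun ω => hn n ω * g ω)]
      exact integral_congr_ae hce
    have h1 : ENNReal.ofReal (∫ ω, hn n ω * g ω ∂μ)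
        = ∫⁻ ω, ENNReal.ofReal (hn n ω * g ω) ∂μ :=
      ofReal_integral_eq_lintegral_ofReal (hint n)
        (Filter.Eventually.of_forall fun ω => mul_nonneg (hhn0 n ω) (hg0 ω))
    have h2 : ENNReal.ofReal (∫ ω, hn n ω * (μ[g|𝒢]) ω ∂μ)
        = ∫⁻ ω, ENNReal.ofReal (hn n ω * (μ[g|𝒢]) ω) ∂μ :=
      ofReal_integral_eq_lintegral_ofReal hint2
        (hB0.mono fun ω hω => mul_nonneg (hhn0 n ω) hω)
    rw [← h1, ← h2, hI]
  -- limits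
  have hmono : ∀ (r : Ω → ℝ), (0 ≤ᵐ[μ] r) →
      (∀ᵐ ω ∂μ, Monotone fun n => ENNReal.ofReal (hn n ω * r ω)) := by
    intro r hr
    filter_upwards [hr] with ω hω
    intro i j hij
    exact ENNReal.ofReal_le_ofReal (mul_le_mul_of_nonneg_right
      (min_le_min le_rfl (Nat.cast_le.2 hij)) hω)
  have hsup : ∀ (r : Ω → ℝ), (0 ≤ᵐ[μ] r) →
      (∀ᵐ ω ∂μ, (⨆ n, ENNReal.ofReal (hn n ω * r ω)) = ENNReal.ofReal (h ω * r ω)) := by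
    intro r hr
    filter_upwards [hr] with ω hω
    have : ∀ n : ℕ, (h ω) ≤ n → hn n ω = h ω := fun n hn' => min_eq_left hn'
    obtain ⟨N, hN⟩ := exists_nat_ge (h ω)
    apply le_antisymm
    · exact iSup_le fun n => ENNReal.ofReal_le_ofReal
        (mul_le_mul_of_nonneg_right (hhnle n ω) hω)
    · calc ENNReal.ofReal (h ω * r ω) = ENNReal.ofReal (hn N ω * r ω) := by
            rw [this N hN]
        _ ≤ ⨆ n, ENNReal.ofReal (hn n ω * r ω) := le_iSup (fun n => ENNReal.ofReal (hn n ω * r ω)) N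
  have haemeas : ∀ (r : Ω → ℝ), AEStronglyMeasurable[m0] r μ →
      ∀ n, AEMeasurable (fun ω => ENNReal.ofReal (hn n ω * r ω)) μ := by
    intro r hr n
    exact (ENNReal.measurable_ofReal.comp_aemeasurable
      ((((hhnSM n).mono h𝒢).aemeasurable).mul hr.aemeasurable))
  have L1 := lintegral_iSup' (haemeas g hgi.aestronglyMeasurable)
    (hmono g (Filter.Eventually.of_forall hg0))
  have L2 := lintegral_iSup' (haemeas _ (stronglyMeasurable_condExp.mono h𝒢).aestronglyMeasurable)
    (hmono _ hB0)
  rw [← lintegral_congr_ae (hsup g (Filter.Eventually.of_forall hg0)),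
    ← lintegral_congr_ae (hsup _ hB0), L1, L2]
  exact iSup_congr key

lemma cond_cauchy_schwarz {Ω : Type*} {m0 : MeasurableSpace Ω} (μ : Measure Ω)
    [IsProbabilityMeasure μ] (𝒢 : MeasurableSpace Ω) (h𝒢 : 𝒢 ≤ m0)
    (u v : Ω → ℝ) (hu0 : ∀ ω, 0 ≤ u ω) (hv0 : ∀ ω, 0 ≤ v ω)
    (hu2 : Integrable (fun ω => u ω ^ 2) μ) (hv2 : Integrable (fun ω => v ω ^ 2) μ)
    (huv : Integrable (fun ω => u ω * v ω) μ) :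
    ∀ᵐ ω ∂μ, ((μ[fun ω' => u ω' * v ω'|𝒢]) ω) ^ 2
      ≤ (μ[fun ω' => u ω' ^ 2|𝒢]) ω * (μ[fun ω' => v ω' ^ 2|𝒢]) ω := by
  set W := μ[fun ω' => u ω' * v ω'|𝒢] with hW
  set A := μ[fun ω' => u ω' ^ 2|𝒢] with hA
  set B := μ[fun ω' => v ω' ^ 2|𝒢] with hB
  have hW0 : 0 ≤ᵐ[μ] W := condExp_nonneg
    (Filter.Eventually.of_forall fun ω => mul_nonneg (hu0 ω) (hv0 ω))
  have hA0 : 0 ≤ᵐ[μ] A := condExp_nonneg (Filter.Eventually.of_forall fun ω => sq_nonneg _)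
  have hB0 : 0 ≤ᵐ[μ] B := condExp_nonneg (Filter.Eventually.of_forall fun ω => sq_nonneg _)
  have key : ∀ p : {q : ℚ // 0 < q}, ∀ᵐ ω ∂μ,
      2 * W ω ≤ (p.1 : ℝ) * A ω + B ω / (p.1 : ℝ) := by
    rintro ⟨q, hq⟩
    have hqR : (0 : ℝ) < (q : ℝ) := by exact_mod_cast hq
    have hpt : ∀ ω, u ω * v ω ≤ ((q : ℝ) / 2) * u ω ^ 2 + (1 / (2 * (q : ℝ))) * v ω ^ 2 := by
      intro ω
      have h1 := sq_nonneg ((q : ℝ) * u ω - v ω)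
      have h2 := hqR
      have h3 : ((q:ℝ) * u ω - v ω) ^ 2 / (2 * (q:ℝ))
          = (q:ℝ)/2 * u ω ^ 2 + 1/(2*(q:ℝ)) * v ω ^ 2 - u ω * v ω := by
        field_simp
        ring
      have h4 := div_nonneg h1 (by positivity : (0:ℝ) ≤ 2 * (q:ℝ))
      rw [h3] at h4
      linarith
    have hint_rhs : Integrable
        (fun ω => ((q:ℝ)/2) • (u ω ^ 2) + (1/(2*(q:ℝ))) • (v ω ^ 2)) μ := by
      exact (hu2.const_mul ((q:ℝ)/2)).add (hv2.const_mul (1/(2*(q:ℝ))))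
    have hmono := condExp_mono (m := 𝒢) huv hint_rhs
      (Filter.Eventually.of_forall fun ω => by simpa [smul_eq_mul] using hpt ω)
    have hadd : μ[(fun ω => ((q:ℝ)/2) • (u ω ^ 2) + (1/(2*(q:ℝ))) • (v ω ^ 2))|𝒢]
        =ᵐ[μ] fun ω => ((q:ℝ)/2) * A ω + (1/(2*(q:ℝ))) * B ω := by
      have h5 : (fun ω => ((q:ℝ)/2) • (u ω ^ 2) + (1/(2*(q:ℝ))) • (v ω ^ 2))
          = (((q:ℝ)/2) • fun ω => u ω ^ 2) + ((1/(2*(q:ℝ))) • fun ω => v ω ^ 2) := by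
        funext ω; simp
      rw [h5]
      refine (condExp_add ((hu2.smul _)) ((hv2.smul _)) 𝒢).trans ?_
      have h6 := condExp_smul (μ := μ) (m := 𝒢) ((q:ℝ)/2) (fun ω => u ω ^ 2)
      have h7 := condExp_smul (μ := μ) (m := 𝒢) (1/(2*(q:ℝ))) (fun ω => v ω ^ 2)
      filter_upwards [h6, h7] with ω h6' h7'
      simp only [Pi.add_apply, h6', h7', Pi.smul_apply, smul_eq_mul]
      rfl
    filter_upwards [hmono, hadd] with ω hω1 hω2
    rw [hω2] at hω1
    have e : 2 * (((q:ℝ)/2) * A ω + (1/(2*(q:ℝ))) * B ω) = (q:ℝ) * A ω + B ω / (q:ℝ) := by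
      field_simp
    linarith
  have haeall := (ae_all_iff.2 key)
  filter_upwards [haeall, hW0, hA0, hB0] with ω h1 h2 h3 h4
  exact real_cs_aux h2 h3 h4 fun q hq => h1 ⟨q, hq⟩

/-- Optimal state-dependent baseline, mini-batch size one: the 𝒢-measurable scalar
`β* = E[⟪G,S⟫ | 𝒢] / E[‖S‖² | 𝒢]` minimizes the second moment `E[‖G − b·S‖²]`
over all 𝒢-measurable baselines `b`, with equality iff `b·S = β*·S` a.s. -/
theorem optimal_conditional_baseline
    {Ω : Type*} [m0 : MeasurableSpace Ω] (μ : Measure Ω) [IsProbabilityMeasure μ]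
    (𝒢 : MeasurableSpace Ω) (h𝒢 : 𝒢 ≤ m0)
    {d : ℕ} (G S : Ω → EuclideanSpace ℝ (Fin d))
    (hG : MemLp G 2 μ) (hS : MemLp S 2 μ)
    (hGS : Integrable (fun ω => ⟪G ω, S ω⟫) μ)
    (hpos : ∀ᵐ ω ∂μ, 0 < (μ[fun ω' => ‖S ω'‖ ^ 2 | 𝒢]) ω)
    (βstar : Ω → ℝ)
    (hβstar : βstar = fun ω =>
      (μ[fun ω' => ⟪G ω', S ω'⟫ | 𝒢]) ω / (μ[fun ω' => ‖S ω'‖ ^ 2 | 𝒢]) ω) :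
    ∀ b : Ω → ℝ, Measurable[𝒢] b →
      Integrable (fun ω => (b ω) ^ 2 * ‖S ω‖ ^ 2) μ →
      (∫ ω, ‖G ω - βstar ω • S ω‖ ^ 2 ∂μ) ≤ ∫ ω, ‖G ω - b ω • S ω‖ ^ 2 ∂μ ∧
      ((∫ ω, ‖G ω - b ω • S ω‖ ^ 2 ∂μ) = ∫ ω, ‖G ω - βstar ω • S ω‖ ^ 2 ∂μ ↔
        (fun ω => b ω • S ω) =ᵐ[μ] fun ω => βstar ω • S ω) := by
  intro b hbmeas hb2int
  -- notation
  set g : Ω → ℝ := fun ω => ‖S ω‖ ^ 2 with hgdef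
  set f : Ω → ℝ := fun ω => ⟪G ω, S ω⟫ with hfdef
  set B : Ω → ℝ := μ[g|𝒢] with hBdef
  set F : Ω → ℝ := μ[f|𝒢] with hFdef
  set A : Ω → ℝ := μ[fun ω => ‖G ω‖ ^ 2|𝒢] with hAdef
  have hg0 : ∀ ω, 0 ≤ g ω := fun ω => sq_nonneg _
  have hgi : Integrable g μ := hS.norm.integrable_sq
  have hG2 : Integrable (fun ω => ‖G ω‖ ^ 2) μ := hG.norm.integrable_sq
  have huv : Integrable (fun ω => ‖G ω‖ * ‖S ω‖) μ := by
    refine Integrable.mono ((hG2.add hgi).div_const 2)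
      (hG.aestronglyMeasurable.norm.mul hS.aestronglyMeasurable.norm) ?_
    refine Filter.Eventually.of_forall fun ω => ?_
    simp only [Pi.add_apply, hgdef, Real.norm_eq_abs]
    rw [abs_of_nonneg (by positivity), abs_of_nonneg (by positivity)]
    nlinarith [sq_nonneg (‖G ω‖ - ‖S ω‖)]
  have hB0 : 0 ≤ᵐ[μ] B := condExp_nonneg (Filter.Eventually.of_forall hg0)
  have hβSM : StronglyMeasurable[𝒢] βstar := by
    rw [hβstar]
    exact ((stronglyMeasurable_condExp.measurable.div
      stronglyMeasurable_condExp.measurable)).stronglyMeasurable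
  have hβB : (fun ω => βstar ω * B ω) =ᵐ[μ] F := by
    filter_upwards [hpos] with ω hω
    rw [hβstar]
    exact div_mul_cancel₀ _ (ne_of_gt hω)
  -- conditional Cauchy-Schwarz
  have hW0 : 0 ≤ᵐ[μ] μ[fun ω => ‖G ω‖ * ‖S ω‖|𝒢] :=
    condExp_nonneg (Filter.Eventually.of_forall fun ω => by positivity)
  have habs : ∀ᵐ ω ∂μ, |F ω| ≤ (μ[fun ω' => ‖G ω'‖ * ‖S ω'‖|𝒢]) ω := by
    have h1 : F ≤ᵐ[μ] μ[fun ω => ‖G ω‖ * ‖S ω‖|𝒢] :=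
      condExp_mono hGS huv (Filter.Eventually.of_forall fun ω =>
        (le_abs_self _).trans (abs_real_inner_le_norm _ _))
    have h2 : μ[fun ω => -f ω|𝒢] ≤ᵐ[μ] μ[fun ω => ‖G ω‖ * ‖S ω‖|𝒢] :=
      condExp_mono hGS.neg huv (Filter.Eventually.of_forall fun ω => by
        have := abs_real_inner_le_norm (G ω) (S ω)
        simp only [hfdef]
        cases abs_le.1 this; linarith)
    have h3 : μ[fun ω => -f ω|𝒢] =ᵐ[μ] fun ω => -F ω := by
      have h4 : μ[-f|𝒢] =ᵐ[μ] -μ[f|𝒢] := condExp_neg f 𝒢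
      filter_upwards [h4] with ω hω
      exact hω
    filter_upwards [h1, h2, h3] with ω hω1 hω2 hω3
    rw [hω3] at hω2
    exact abs_le.2 ⟨by linarith, hω1⟩
  have hCS := cond_cauchy_schwarz μ 𝒢 h𝒢 (fun ω => ‖G ω‖) (fun ω => ‖S ω‖)
    (fun ω => norm_nonneg _) (fun ω => norm_nonneg _) hG2 hgi huv
  have hF2 : ∀ᵐ ω ∂μ, F ω ^ 2 ≤ A ω * B ω := by
    filter_upwards [habs, hCS, hW0] with ω h1 h2 h3
    calc F ω ^ 2 = |F ω| ^ 2 := (sq_abs _).symm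
      _ ≤ ((μ[fun ω' => ‖G ω'‖ * ‖S ω'‖|𝒢]) ω) ^ 2 := by
            nlinarith [abs_nonneg (F ω)]
      _ ≤ A ω * B ω := h2
  -- integrability of βstar ^ 2 * g
  have hβ2B_le_A : ∀ᵐ ω ∂μ, βstar ω ^ 2 * B ω ≤ A ω := by
    filter_upwards [hpos, hF2] with ω h1 h2
    rw [hβstar]
    have he : (F ω / B ω) ^ 2 * B ω = F ω ^ 2 / B ω := by
      field_simp
    rw [he, div_le_iff₀ h1]
    linarith
  have hA_int : Integrable A μ := integrable_condExp
  have hβ2g_int : Integrable (fun ω => βstar ω ^ 2 * g ω) μ := by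
    have hβ2SM : StronglyMeasurable[𝒢] (fun ω => βstar ω ^ 2) := by
      have h : (fun ω => βstar ω ^ 2) = βstar * βstar := by funext ω; simp [pow_two]
      rw [h]; exact hβSM.mul hβSM
    have hpull := pullout_nonneg μ 𝒢 h𝒢 (fun ω => βstar ω ^ 2) g
      hβ2SM (fun ω => sq_nonneg _) hgi hg0
    refine ⟨((hβ2SM.mono h𝒢).aestronglyMeasurable).mul hgi.aestronglyMeasurable, ?_⟩
    have hnn : ∀ ω, (‖βstar ω ^ 2 * g ω‖₊ : ENNReal) = ENNReal.ofReal (βstar ω ^ 2 * g ω) := by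
      intro ω
      rw [← enorm_eq_nnnorm, ← ofReal_norm, Real.norm_eq_abs,
        abs_of_nonneg (mul_nonneg (sq_nonneg _) (hg0 ω))]
    show ∫⁻ ω, (‖βstar ω ^ 2 * g ω‖₊ : ENNReal) ∂μ < ⊤
    calc ∫⁻ ω, (‖βstar ω ^ 2 * g ω‖₊ : ENNReal) ∂μ
        = ∫⁻ ω, ENNReal.ofReal (βstar ω ^ 2 * g ω) ∂μ := lintegral_congr fun ω => hnn ω
      _ = ∫⁻ ω, ENNReal.ofReal (βstar ω ^ 2 * B ω) ∂μ := hpull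
      _ ≤ ∫⁻ ω, ENNReal.ofReal (A ω) ∂μ :=
          lintegral_mono_ae (hβ2B_le_A.mono fun ω h => ENNReal.ofReal_le_ofReal h)
      _ ≤ ∫⁻ ω, (‖A ω‖₊ : ENNReal) ∂μ := lintegral_mono fun ω => by
          rw [← enorm_eq_nnnorm, ← ofReal_norm, Real.norm_eq_abs]
          exact ENNReal.ofReal_le_ofReal (le_abs_self _)
      _ < ⊤ := hA_int.2
  -- orthogonality
  have horth : ∀ h : Ω → ℝ, StronglyMeasurable[𝒢] h →
      Integrable (fun ω => h ω ^ 2 * g ω) μ →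
      Integrable (fun ω => h ω * f ω) μ ∧
      Integrable (fun ω => h ω * (βstar ω * g ω)) μ ∧
      ∫ ω, h ω * f ω ∂μ = ∫ ω, h ω * (βstar ω * g ω) ∂μ := by
    intro h hhSM hh2g
    have hhf : Integrable (fun ω => h ω * f ω) μ := by
      refine Integrable.mono ((hh2g.add hG2).div_const 2)
        (((hhSM.mono h𝒢).aestronglyMeasurable).mul hGS.aestronglyMeasurable) ?_
      refine Filter.Eventually.of_forall fun ω => ?_
      simp only [Pi.add_apply, Real.norm_eq_abs, hgdef, hfdef]
      have hnn : (0:ℝ) ≤ (h ω ^ 2 * ‖S ω‖ ^ 2 + ‖G ω‖ ^ 2) / 2 := by positivity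
      rw [abs_of_nonneg hnn, abs_mul]
      have h1 : |⟪G ω, S ω⟫| ≤ ‖G ω‖ * ‖S ω‖ := abs_real_inner_le_norm _ _
      have h3 := sq_nonneg (|h ω| * ‖S ω‖ - ‖G ω‖)
      have h4 : |h ω| ^ 2 = h ω ^ 2 := sq_abs _
      nlinarith [abs_nonneg (h ω), norm_nonneg (S ω), norm_nonneg (G ω),
        mul_le_mul_of_nonneg_left h1 (abs_nonneg (h ω))]
    have hhβg : Integrable (fun ω => (h ω * βstar ω) * g ω) μ := by
      refine Integrable.mono ((hh2g.add hβ2g_int).div_const 2)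
        ((((hhSM.mono h𝒢).aestronglyMeasurable).mul
          ((hβSM.mono h𝒢).aestronglyMeasurable)).mul hgi.aestronglyMeasurable) ?_
      refine Filter.Eventually.of_forall fun ω => ?_
      simp only [Pi.add_apply, Real.norm_eq_abs]
      rw [abs_of_nonneg (by positivity : (0:ℝ) ≤ (h ω ^ 2 * g ω + βstar ω ^ 2 * g ω) / 2),
        abs_mul, abs_mul, abs_of_nonneg (hg0 ω)]
      have h3 := sq_nonneg (|h ω| - |βstar ω|)
      have h4 : |h ω| ^ 2 = h ω ^ 2 := sq_abs _
      have h5 : |βstar ω| ^ 2 = βstar ω ^ 2 := sq_abs _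
      nlinarith [hg0 ω, mul_nonneg (mul_nonneg (abs_nonneg (h ω)) (abs_nonneg (βstar ω))) (hg0 ω)]
    have hcm1 : μ[h * f|𝒢] =ᵐ[μ] h * F :=
      condExp_mul_of_stronglyMeasurable_left hhSM (by exact hhf) hGS
    have hI1 : ∫ ω, h ω * f ω ∂μ = ∫ ω, h ω * F ω ∂μ := by
      calc ∫ ω, h ω * f ω ∂μ = ∫ ω, (μ[h * f|𝒢]) ω ∂μ :=
            (integral_condExp h𝒢 (f := h * f)).symm
        _ = ∫ ω, h ω * F ω ∂μ := integral_congr_ae (hcm1.mono fun ω hω => by simpa using hω)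
    have hcm2 : μ[(h * βstar) * g|𝒢] =ᵐ[μ] (h * βstar) * B :=
      condExp_mul_of_stronglyMeasurable_left (hhSM.mul hβSM) (by exact hhβg) hgi
    have hI2 : ∫ ω, (h ω * βstar ω) * g ω ∂μ = ∫ ω, h ω * F ω ∂μ := by
      calc ∫ ω, (h ω * βstar ω) * g ω ∂μ = ∫ ω, (μ[(h * βstar) * g|𝒢]) ω ∂μ :=
            (integral_condExp h𝒢 (f := (h * βstar) * g)).symm
        _ = ∫ ω, (h ω * βstar ω) * B ω ∂μ :=
            integral_congr_ae (hcm2.mono fun ω hω => by simpa using hω)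
        _ = ∫ ω, h ω * F ω ∂μ := by
            refine integral_congr_ae ?_
            filter_upwards [hβB] with ω hω
            rw [mul_assoc, hω]
    refine ⟨hhf, by simpa [mul_assoc] using hhβg, ?_⟩
    rw [hI1, ← hI2]
    simp_rw [mul_assoc]
  -- expansion of the squared norm
  have hexp : ∀ h : Ω → ℝ, (fun ω => ‖G ω - h ω • S ω‖ ^ 2)
      = fun ω => ‖G ω‖ ^ 2 - 2 * (h ω * f ω) + h ω ^ 2 * g ω := by
    intro h; funext ω
    rw [norm_sub_sq_real, real_inner_smul_right, norm_smul]
    simp only [hfdef, hgdef, mul_pow, Real.norm_eq_abs, sq_abs]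
  have hint_eval : ∀ h : Ω → ℝ, Integrable (fun ω => h ω * f ω) μ →
      Integrable (fun ω => h ω ^ 2 * g ω) μ →
      ∫ ω, ‖G ω - h ω • S ω‖ ^ 2 ∂μ
        = ∫ ω, ‖G ω‖ ^ 2 ∂μ - 2 * ∫ ω, h ω * f ω ∂μ + ∫ ω, h ω ^ 2 * g ω ∂μ := by
    intro h h1 h2
    have hint1 : Integrable (fun ω => ‖G ω‖ ^ 2 - 2 * (h ω * f ω)) μ :=
      hG2.sub (h1.const_mul 2)
    have hint2 : Integrable (fun ω => 2 * (h ω * f ω)) μ := h1.const_mul 2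
    rw [hexp h, integral_add hint1 h2, integral_sub hG2 hint2, integral_const_mul]
  obtain ⟨hbf, hbβg, hb_eq⟩ := horth b hbmeas.stronglyMeasurable hb2int
  obtain ⟨hβf, hββg, hβ_eq⟩ := horth βstar hβSM hβ2g_int
  have hββg' : (fun ω => βstar ω * (βstar ω * g ω)) = fun ω => βstar ω ^ 2 * g ω := by
    funext ω; ring
  have hβ_eq2 : ∫ ω, βstar ω * f ω ∂μ = ∫ ω, βstar ω ^ 2 * g ω ∂μ := by
    rw [hβ_eq, hββg']
  -- the difference term
  have hcomb : (fun ω => (b ω - βstar ω) ^ 2 * g ω)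
      = fun ω => b ω ^ 2 * g ω - 2 * (b ω * (βstar ω * g ω)) + βstar ω ^ 2 * g ω := by
    funext ω; ring
  have hdiff_int : Integrable (fun ω => (b ω - βstar ω) ^ 2 * g ω) μ := by
    rw [hcomb]; exact (hb2int.sub (hbβg.const_mul 2)).add hβ2g_int
  have hdiffI : ∫ ω, (b ω - βstar ω) ^ 2 * g ω ∂μ
      = ∫ ω, b ω ^ 2 * g ω ∂μ - 2 * ∫ ω, b ω * (βstar ω * g ω) ∂μ
        + ∫ ω, βstar ω ^ 2 * g ω ∂μ := by
    have hint1 : Integrable (fun ω => b ω ^ 2 * g ω - 2 * (b ω * (βstar ω * g ω))) μ :=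
      hb2int.sub (hbβg.const_mul 2)
    have hint2 : Integrable (fun ω => 2 * (b ω * (βstar ω * g ω))) μ := hbβg.const_mul 2
    rw [hcomb, integral_add hint1 hβ2g_int, integral_sub hb2int hint2, integral_const_mul]
  have hkey : ∫ ω, ‖G ω - b ω • S ω‖ ^ 2 ∂μ
      = ∫ ω, ‖G ω - βstar ω • S ω‖ ^ 2 ∂μ + ∫ ω, (b ω - βstar ω) ^ 2 * g ω ∂μ := by
    rw [hint_eval b hbf hb2int, hint_eval βstar hβf hβ2g_int, hdiffI]
    linarith [hb_eq, hβ_eq2]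
  have hD0 : 0 ≤ ∫ ω, (b ω - βstar ω) ^ 2 * g ω ∂μ :=
    integral_nonneg fun ω => mul_nonneg (sq_nonneg _) (hg0 ω)
  constructor
  · linarith [hkey, hD0]
  · rw [hkey, add_eq_left]
    rw [integral_eq_zero_iff_of_nonneg_ae
      (Filter.Eventually.of_forall fun ω => mul_nonneg (sq_nonneg _) (hg0 ω)) hdiff_int]
    constructor
    · intro hz
      filter_upwards [hz] with ω hω
      rcases mul_eq_zero.1 hω with h' | h'
      · have hb0 : b ω - βstar ω = 0 := by
          have := sq_eq_zero_iff.1 h'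
          exact this
        have : b ω = βstar ω := by linarith [hb0]
        rw [this]
      · have hS0 : S ω = 0 := by
          have h1 : ‖S ω‖ = 0 := by
            have := sq_eq_zero_iff.1 h'
            exact this
          exact norm_eq_zero.1 h1
        simp [hS0]
    · intro hae
      filter_upwards [hae] with ω hω
      have h1 : (b ω - βstar ω) • S ω = 0 := by
        rw [sub_smul, hω, sub_self]
      have h2 : |b ω - βstar ω| * ‖S ω‖ = 0 := by
        have := congrArg norm h1
        rwa [norm_smul, Real.norm_eq_abs, norm_zero] at this
      have h3 : (b ω - βstar ω) ^ 2 * g ω = (|b ω - βstar ω| * ‖S ω‖) ^ 2 := by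
        simp only [hgdef, mul_pow, sq_abs]
      rw [h3, h2]
      simp
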